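/- Let p be a prime with p ∤ 3ab, where a, b are nonzero coprime integers, and let C(x,y) = a x^3 + b y^3. Then R(C) = { C(x,y)/C(z,w) : x,y,z,w ∈ Z, C(z,w) ≠ 0 } is dense in Q_p if and only if b·a^{-1} is a cubic residue modulo p. -/

import Mathlib

set_option linter.unusedSectionVars false
set_option linter.unusedVariables false
set_option maxHeartbeats 1000000

section StmtAux
variable {p : ℕ} [hp : Fact p.Prime]

private lemma pZ_prime : Prime (p : ℤ) := Nat.prime_iff_prime_int.mp hp.out

private lemma exists_inv (m : ℤ) (hm : ¬ (p:ℤ) ∣ m) (N : ℕ) :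
    ∃ e : ℤ, (p:ℤ)^N ∣ m * e - 1 := by
  have h : IsCoprime ((p:ℤ)) m := (pZ_prime.coprime_iff_not_dvd).mpr hm
  have h2 : IsCoprime ((p:ℤ)^N) m := h.pow_left
  obtain ⟨u, v, huv⟩ := h2
  exact ⟨v, ⟨-u, by linear_combination huv⟩⟩

private lemma hensel_lift (a b x0 d : ℤ) (hroot : (p:ℤ) ∣ a * x0^3 + b)
    (hd : (p:ℤ) ∣ 3 * a * x0^2 * d - 1) :
    ∀ m : ℕ, ∃ x : ℤ, (p:ℤ) ∣ x - x0 ∧ (p:ℤ)^(m+1) ∣ a * x^3 + b := by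
  intro m
  induction m with
  | zero => exact ⟨x0, by simp, by simpa using hroot⟩
  | succ m ih =>
    obtain ⟨x, hx1, hx2⟩ := ih
    set g := a * x^3 + b with hg
    have hpg : (p:ℤ) ∣ g := (dvd_pow_self (p:ℤ) (Nat.succ_ne_zero m)).trans hx2
    refine ⟨x - g * d, ?_, ?_⟩
    · have h : x - g * d - x0 = (x - x0) - g * d := by ring
      rw [h]; exact hx1.sub (hpg.mul_right d)
    · have h1 : (p:ℤ) ∣ 3 * a * x^2 * d - 1 := by
        have h : 3 * a * x^2 * d - 1
            = (3 * a * x0^2 * d - 1) + 3 * a * d * ((x - x0) * (x + x0)) := by ring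
        rw [h]
        exact hd.add ((hx1.mul_right (x + x0)).mul_left (3 * a * d))
      have h2 : ((p:ℤ))^(m+1+1) ∣ g * (3 * a * x^2 * d - 1) := by
        have := mul_dvd_mul hx2 h1
        simpa [pow_succ] using this
      have h3 : ((p:ℤ))^(m+1+1) ∣ g * g := by
        have := mul_dvd_mul hx2 hpg
        simpa [pow_succ] using this
      have key : a * (x - g * d)^3 + b
          = -(g * (3 * a * x^2 * d - 1)) + (g * g) * (3 * a * x * d^2 - a * g * d^3) := by
        rw [hg]; ring
      rw [key]
      exact dvd_add (dvd_neg.mpr h2) (h3.mul_right _)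

private lemma algebra_helper (P T a b x c e G s : ℤ)
    (hG : a * x^3 + b = ((P*T) * P) * G) (hs : 3 * a * x^2 * e = 1 + P * s) :
    a * (x + (P*T) * (c * e))^3 + b
      = (P*T) * (c + P * (c * s + G + T * (3 * a * x * (c*e)^2 + a * (P*T) * (c*e)^3))) := by
  linear_combination hG + P * T * c * hs

private lemma stepB (a b x0 d : ℤ)
    (hpa : ¬ (p:ℤ) ∣ a) (hp3 : ¬ (p:ℤ) ∣ 3) (hpx0 : ¬ (p:ℤ) ∣ x0)
    (hensel : ∀ m : ℕ, ∃ x : ℤ, (p:ℤ) ∣ x - x0 ∧ (p:ℤ)^(m+1) ∣ a * x^3 + b)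
    (N k : ℕ) (hN : 1 ≤ N) (hk : N ≤ k) (c : ℤ) :
    ∃ y w : ℤ, a * y^3 + b = (p:ℤ)^k * (c + (p:ℤ)^N * w) := by
  obtain ⟨x, hx1, hx2⟩ := hensel (k + N - 1)
  have hkN : k + N - 1 + 1 = k + N := by omega
  rw [hkN] at hx2
  have hpx : ¬ (p:ℤ) ∣ x := fun h => hpx0 (by simpa using h.sub hx1)
  have hp3ax2 : ¬ (p:ℤ) ∣ 3 * a * x^2 := by
    intro h
    rcases (pZ_prime.dvd_mul).mp h with h' | h'
    · rcases (pZ_prime.dvd_mul).mp h' with h'' | h''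
      · exact hp3 h''
      · exact hpa h''
    · exact hpx (pZ_prime.dvd_of_dvd_pow h')
  obtain ⟨e, he⟩ := exists_inv (3 * a * x^2) hp3ax2 N
  obtain ⟨s, hs0⟩ := he
  have hs : 3 * a * x^2 * e = 1 + (p:ℤ)^N * s := by linarith
  obtain ⟨G, hG0⟩ := hx2
  set t := k - N with ht
  have hkt : k = N + t := by omega
  have hQ : (p:ℤ)^k = (p:ℤ)^N * (p:ℤ)^t := by rw [hkt, pow_add]
  have hG : a * x^3 + b = (((p:ℤ)^N * (p:ℤ)^t) * (p:ℤ)^N) * G := by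
    rw [← hQ, hG0, hkt]; ring_nf
  refine ⟨x + ((p:ℤ)^N * (p:ℤ)^t) * (c * e),
    c * s + G + (p:ℤ)^t * (3 * a * x * (c*e)^2 + a * ((p:ℤ)^N * (p:ℤ)^t) * (c*e)^3), ?_⟩
  rw [hQ]
  exact algebra_helper ((p:ℤ)^N) ((p:ℤ)^t) a b x c e G s hG hs

private lemma extract_pow' (n : ℤ) (hn : n ≠ 0) :
    ∃ (k : ℕ) (m : ℤ), ¬ (p:ℤ) ∣ m ∧ n = (p:ℤ)^k * m := by
  obtain ⟨K, hK⟩ : ∃ K, n.natAbs ≤ K := ⟨n.natAbs, le_refl _⟩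
  induction K generalizing n with
  | zero => exact absurd (Int.natAbs_eq_zero.mp (Nat.le_zero.mp hK)) hn
  | succ K ih =>
    by_cases hd : (p:ℤ) ∣ n
    · obtain ⟨n₁, rfl⟩ := hd
      have hn₁ : n₁ ≠ 0 := by rintro rfl; simp at hn
      have h1 : 1 ≤ n₁.natAbs := Int.natAbs_pos.mpr hn₁
      have h2 : 2 ≤ p := hp.out.two_le
      have h3 : ((p:ℤ) * n₁).natAbs = p * n₁.natAbs := by
        rw [Int.natAbs_mul, Int.natAbs_natCast]
      have h4 : 2 * n₁.natAbs ≤ p * n₁.natAbs := Nat.mul_le_mul_right _ h2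
      have h5 : n₁.natAbs ≤ K := by omega
      obtain ⟨k, m, hm, hEq⟩ := ih n₁ hn₁ h5
      exact ⟨k + 1, m, hm, by rw [hEq]; ring⟩
    · exact ⟨0, n, hd, by simp⟩

private lemma val3 (a b a' : ℤ) (hpa : ¬ (p:ℤ) ∣ a)
    (hA : (p:ℤ) ∣ a * a' - 1)
    (hnores : ¬ ∃ x : ℤ, x ^ 3 ≡ b * a' [ZMOD (p : ℤ)]) :
    ∀ x y : ℤ, a * x^3 + b * y^3 ≠ 0 →
      ∃ (j : ℕ) (m : ℤ), ¬ (p:ℤ) ∣ m ∧ a * x^3 + b * y^3 = (p:ℤ)^(3*j) * m := by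
  intro x y hxy
  obtain ⟨K, hK⟩ : ∃ K, (a * x^3 + b * y^3).natAbs ≤ K := ⟨_, le_refl _⟩
  induction K generalizing x y with
  | zero => exact absurd (Int.natAbs_eq_zero.mp (Nat.le_zero.mp hK)) hxy
  | succ K ih =>
    by_cases hd : (p:ℤ) ∣ a * x^3 + b * y^3
    · have hpy : (p:ℤ) ∣ y := by
        by_contra hpy
        have h : IsCoprime ((p:ℤ)) y := (pZ_prime.coprime_iff_not_dvd).mpr hpy
        obtain ⟨u, v, huv⟩ := h
        set e := v with he
        have hE : (p:ℤ) ∣ y * e - 1 := ⟨-u, by linear_combination huv⟩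
        apply hnores
        refine ⟨-x * e, ?_⟩
        rw [Int.modEq_iff_dvd]
        have h1 : (p:ℤ) ∣ (y*e)^3 - 1 := by
          have : (y*e)^3 - 1 = (y*e - 1) * ((y*e)^2 + y*e + 1) := by ring
          rw [this]; exact hE.mul_right _
        have key : b * a' - (-x * e)^3
            = a' * e^3 * (a * x^3 + b * y^3) - x^3 * e^3 * (a * a' - 1)
              - b * a' * ((y*e)^3 - 1) := by ring
        rw [key]
        exact ((hd.mul_left _).sub (hA.mul_left _)).sub (h1.mul_left _)
      have hpx : (p:ℤ) ∣ x := by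
        obtain ⟨y₁, rfl⟩ := hpy
        have h : (p:ℤ) ∣ a * x^3 := by
          have h2 : a * x^3
              = (a * x^3 + b * ((p:ℤ)*y₁)^3) - (p:ℤ) * (b * (p:ℤ)^2 * y₁^3) := by ring
          rw [h2]; exact hd.sub (Dvd.intro _ rfl)
        rcases (pZ_prime.dvd_mul).mp h with h' | h'
        · exact absurd h' hpa
        · exact pZ_prime.dvd_of_dvd_pow h'
      obtain ⟨x₁, rfl⟩ := hpx
      obtain ⟨y₁, rfl⟩ := hpy
      have hfac : a * ((p:ℤ)*x₁)^3 + b * ((p:ℤ)*y₁)^3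
          = (p:ℤ)^3 * (a * x₁^3 + b * y₁^3) := by ring
      have hC₁ : a * x₁^3 + b * y₁^3 ≠ 0 := by
        intro h0; apply hxy; rw [hfac, h0, mul_zero]
      have hle : (a * x₁^3 + b * y₁^3).natAbs ≤ K := by
        have h1 : 1 ≤ (a * x₁^3 + b * y₁^3).natAbs := Int.natAbs_pos.mpr hC₁
        have h2 : (a * ((p:ℤ)*x₁)^3 + b * ((p:ℤ)*y₁)^3).natAbs
            = p^3 * (a * x₁^3 + b * y₁^3).natAbs := by
          rw [hfac, Int.natAbs_mul]
          simp [Int.natAbs_pow]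
        have h3 : 2^3 ≤ p^3 := Nat.pow_le_pow_left hp.out.two_le 3
        have h4 : 2^3 * (a * x₁^3 + b * y₁^3).natAbs ≤ p^3 * (a * x₁^3 + b * y₁^3).natAbs :=
          Nat.mul_le_mul_right _ h3
        have h5 := hK
        rw [h2] at h5
        omega
      obtain ⟨j, m, hm, hEq⟩ := ih x₁ y₁ hC₁ hle
      refine ⟨j + 1, m, hm, ?_⟩
      rw [hfac, hEq, ← mul_assoc, ← pow_add]
      congr 2
      omega
    · exact ⟨0, a * x^3 + b * y^3, hd, by simp⟩

private lemma norm_int_unit (m : ℤ) (hm : ¬ (p:ℤ) ∣ m) : ‖(m : ℚ_[p])‖ = 1 :=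
  le_antisymm (Padic.norm_int_le_one m)
    (not_lt.mp (fun h => hm ((Padic.norm_intCast_lt_one_iff (k := m)).mp h)))

private lemma norm_pow_mul (j : ℕ) (m : ℤ) (hm : ¬ (p:ℤ) ∣ m) :
    ‖(((p:ℤ)^j * m : ℤ) : ℚ_[p])‖ = (p:ℝ) ^ (-(j:ℤ)) := by
  push_cast
  rw [norm_mul, norm_pow, Padic.norm_p, norm_int_unit m hm, mul_one,
    inv_pow, ← zpow_natCast, ← zpow_neg]

private lemma not_dense_aux (a b a' : ℤ) (hpa : ¬ (p:ℤ) ∣ a)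
    (hA : (p:ℤ) ∣ a * a' - 1)
    (hnores : ¬ ∃ x : ℤ, x ^ 3 ≡ b * a' [ZMOD (p : ℤ)]) :
    ¬ Dense {q : ℚ_[p] | ∃ x y z w : ℤ, a * z ^ 3 + b * w ^ 3 ≠ 0 ∧
        q = ((a * x ^ 3 + b * y ^ 3 : ℤ) : ℚ_[p]) / ((a * z ^ 3 + b * w ^ 3 : ℤ) : ℚ_[p])} := by
  have hval3 := val3 a b a' hpa hA hnores
  intro hD
  have hp1 : (1:ℝ) < (p:ℝ) := by exact_mod_cast hp.out.one_lt
  have hp0 : (0:ℝ) < (p:ℝ) := lt_trans one_pos hp1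
  obtain ⟨s, hball, hs⟩ := Metric.dense_iff.mp hD ((p:ℕ) : ℚ_[p]) ((p:ℝ)^(-2:ℤ))
    (by positivity)
  obtain ⟨x, y, z, w, hzw, rfl⟩ := hs
  have hdist := Metric.mem_ball.mp hball
  rw [dist_eq_norm] at hdist
  have hnormp : ‖((p:ℕ) : ℚ_[p])‖ = (p:ℝ)^(-1:ℤ) := by
    rw [Padic.norm_p, ← zpow_neg_one]
  have h21 : ((p:ℝ))^(-2:ℤ) ≤ ((p:ℝ))^(-1:ℤ) := zpow_le_zpow_right₀ (le_of_lt hp1) (by norm_num)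
  by_cases hA0 : a * x^3 + b * y^3 = 0
  · rw [hA0] at hdist
    simp only [Int.cast_zero, zero_div, zero_sub, norm_neg] at hdist
    rw [hnormp] at hdist
    linarith
  · obtain ⟨j1, m1, hm1, hEq1⟩ := hval3 x y hA0
    obtain ⟨j2, m2, hm2, hEq2⟩ := hval3 z w hzw
    have hn1 : ‖((a * x^3 + b * y^3 : ℤ) : ℚ_[p])‖ = (p:ℝ)^(-(3*j1:ℕ):ℤ) := by
      rw [hEq1]; exact norm_pow_mul _ _ hm1
    have hn2 : ‖((a * z^3 + b * w^3 : ℤ) : ℚ_[p])‖ = (p:ℝ)^(-(3*j2:ℕ):ℤ) := by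
      rw [hEq2]; exact norm_pow_mul _ _ hm2
    have hns : ‖((a * x^3 + b * y^3 : ℤ) : ℚ_[p]) / ((a * z^3 + b * w^3 : ℤ) : ℚ_[p])‖
        = (p:ℝ)^((3*j2:ℕ) - (3*j1:ℕ) : ℤ) := by
      rw [norm_div, hn1, hn2, ← zpow_sub₀ (ne_of_gt hp0)]
      congr 1
      ring
    have hne : ‖((a * x^3 + b * y^3 : ℤ) : ℚ_[p]) / ((a * z^3 + b * w^3 : ℤ) : ℚ_[p])‖
        ≠ ‖((p:ℕ) : ℚ_[p])‖ := by
      rw [hns, hnormp]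
      intro hcontra
      have := zpow_right_injective₀ hp0 (ne_of_gt hp1) hcontra
      omega
    have hmax : ‖((a * x^3 + b * y^3 : ℤ) : ℚ_[p]) / ((a * z^3 + b * w^3 : ℤ) : ℚ_[p])
        - ((p:ℕ) : ℚ_[p])‖
        = ‖((a * x^3 + b * y^3 : ℤ) : ℚ_[p]) / ((a * z^3 + b * w^3 : ℤ) : ℚ_[p])‖
          ⊔ ‖((p:ℕ) : ℚ_[p])‖ := by
      rw [sub_eq_add_neg, Padic.add_eq_max_of_ne (by rwa [norm_neg]), norm_neg]
    rw [hmax] at hdist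
    have : ((p:ℝ))^(-1:ℤ) ≤ ‖((a * x^3 + b * y^3 : ℤ) : ℚ_[p]) / ((a * z^3 + b * w^3 : ℤ) : ℚ_[p])‖
        ⊔ ‖((p:ℕ) : ℚ_[p])‖ := le_sup_of_le_right (le_of_eq hnormp.symm)
    linarith

private lemma approx (a b : ℤ) (hpa : ¬ (p:ℤ) ∣ a)
    (hstepB : ∀ N k : ℕ, 1 ≤ N → N ≤ k → ∀ c : ℤ,
      ∃ y w : ℤ, a * y^3 + b = (p:ℤ)^k * (c + (p:ℤ)^N * w))
    (n dd : ℤ) (hdd : dd ≠ 0) (ε : ℝ) (hε : 0 < ε) :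
    ∃ s ∈ {q : ℚ_[p] | ∃ x y z w : ℤ, a * z ^ 3 + b * w ^ 3 ≠ 0 ∧
        q = ((a * x ^ 3 + b * y ^ 3 : ℤ) : ℚ_[p]) / ((a * z ^ 3 + b * w ^ 3 : ℤ) : ℚ_[p])},
      ‖(n : ℚ_[p]) / (dd : ℚ_[p]) - s‖ < ε := by
  have hp1 : (1:ℝ) < (p:ℝ) := by exact_mod_cast hp.out.one_lt
  have hp0 : (0:ℝ) < (p:ℝ) := lt_trans one_pos hp1
  have hpinv : ((p:ℝ))⁻¹ < 1 := inv_lt_one_of_one_lt₀ hp1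
  have ha0 : a ≠ 0 := by rintro rfl; exact hpa (dvd_zero _)
  have haC : ((a:ℤ) : ℚ_[p]) ≠ 0 := Int.cast_ne_zero.mpr ha0
  obtain ⟨j, hj⟩ := exists_pow_lt_of_lt_one hε hpinv
  by_cases hn0 : n = 0
  · refine ⟨((a * ((p:ℤ)^j) ^ 3 + b * (0:ℤ) ^ 3 : ℤ) : ℚ_[p]) /
        ((a * (1:ℤ) ^ 3 + b * (0:ℤ) ^ 3 : ℤ) : ℚ_[p]),
      ⟨(p:ℤ)^j, 0, 1, 0, by simpa using ha0, rfl⟩, ?_⟩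
    have hsimp : ((a * ((p:ℤ)^j) ^ 3 + b * (0:ℤ) ^ 3 : ℤ) : ℚ_[p]) /
        ((a * (1:ℤ) ^ 3 + b * (0:ℤ) ^ 3 : ℤ) : ℚ_[p]) = ((p:ℚ_[p]))^(3*j) := by
      push_cast
      field_simp
      rw [mul_zero, add_zero, add_zero, mul_div_cancel_left₀ _ haC, ← pow_mul,
        mul_comm j 3]
    rw [hsimp, hn0]
    simp only [Int.cast_zero, zero_div, zero_sub, norm_neg, norm_pow, Padic.norm_p]
    calc ((p:ℝ))⁻¹ ^ (3*j) ≤ ((p:ℝ))⁻¹ ^ j := by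
          apply pow_le_pow_of_le_one (by positivity) (le_of_lt hpinv)
          omega
      _ < ε := hj
  · obtain ⟨k1, n', hn', hneq⟩ := extract_pow' (p := p) n hn0
    obtain ⟨k2, d', hd', hdeq⟩ := extract_pow' (p := p) dd hdd
    set N := j + k2 + 1 with hN
    obtain ⟨y1, w1, hA⟩ := hstepB N (N + k1) (by omega) (by omega) n'
    obtain ⟨y2, w2, hB⟩ := hstepB N (N + k2) (by omega) (by omega) d'
    have hu2 : ¬ (p:ℤ) ∣ (d' + (p:ℤ)^N * w2) := by
      intro h
      apply hd'
      have hpN : (p:ℤ) ∣ (p:ℤ)^N := dvd_pow_self _ (by omega)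
      have := h.sub (hpN.mul_right w2)
      simpa using this
    have hBne : a * y2^3 + b * (1:ℤ)^3 ≠ 0 := by
      have h1 : (d' + (p:ℤ)^N * w2) ≠ 0 := fun h => hu2 (h ▸ dvd_zero _)
      have h2 : ((p:ℤ))^(N+k2) ≠ 0 := pow_ne_zero _ (by exact_mod_cast hp.out.ne_zero)
      simp only [one_pow, mul_one]
      rw [hB]
      exact mul_ne_zero h2 h1
    have hA' : a * y1^3 + b * (1:ℤ)^3 = (p:ℤ)^(N+k1) * (n' + (p:ℤ)^N * w1) := by
      rw [one_pow, mul_one]; exact hA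
    have hB' : a * y2^3 + b * (1:ℤ)^3 = (p:ℤ)^(N+k2) * (d' + (p:ℤ)^N * w2) := by
      rw [one_pow, mul_one]; exact hB
    refine ⟨((a * y1 ^ 3 + b * (1:ℤ) ^ 3 : ℤ) : ℚ_[p]) /
        ((a * y2 ^ 3 + b * (1:ℤ) ^ 3 : ℤ) : ℚ_[p]),
      ⟨y1, 1, y2, 1, hBne, rfl⟩, ?_⟩
    have hBC : ((a * y2 ^ 3 + b * (1:ℤ) ^ 3 : ℤ) : ℚ_[p]) ≠ 0 := Int.cast_ne_zero.mpr hBne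
    have hddC : ((dd:ℤ) : ℚ_[p]) ≠ 0 := Int.cast_ne_zero.mpr hdd
    have heq : (n : ℚ_[p]) / (dd : ℚ_[p])
        - ((a * y1 ^ 3 + b * (1:ℤ) ^ 3 : ℤ) : ℚ_[p]) / ((a * y2 ^ 3 + b * (1:ℤ) ^ 3 : ℤ) : ℚ_[p])
        = ((n * (a * y2 ^ 3 + b * (1:ℤ) ^ 3) - (a * y1 ^ 3 + b * (1:ℤ) ^ 3) * dd : ℤ) : ℚ_[p])
          / ((dd * (a * y2 ^ 3 + b * (1:ℤ) ^ 3) : ℤ) : ℚ_[p]) := by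
      rw [div_sub_div _ _ hddC hBC]
      congr 1 <;> push_cast <;> ring
    have hdvd : ((p:ℤ))^(k1 + k2 + 2*N)
        ∣ n * (a * y2 ^ 3 + b * (1:ℤ) ^ 3) - (a * y1 ^ 3 + b * (1:ℤ) ^ 3) * dd := by
      refine ⟨n' * w2 - w1 * d', ?_⟩
      rw [hA', hB', hneq, hdeq]
      ring
    have hnum : ‖((n * (a * y2 ^ 3 + b * (1:ℤ) ^ 3) - (a * y1 ^ 3 + b * (1:ℤ) ^ 3) * dd : ℤ)
        : ℚ_[p])‖ ≤ (p:ℝ) ^ (-(k1 + k2 + 2*N : ℕ) : ℤ) := by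
      rw [show (-(k1 + k2 + 2*N : ℕ) : ℤ) = -((k1 + k2 + 2*N : ℕ) : ℤ) by push_cast; ring]
      exact (Padic.norm_int_le_pow_iff_dvd _ _).mpr hdvd
    have hden : ‖((dd * (a * y2 ^ 3 + b * (1:ℤ) ^ 3) : ℤ) : ℚ_[p])‖
        = (p:ℝ) ^ (-(k2 + (N + k2) : ℕ) : ℤ) := by
      have h1 : ‖((dd:ℤ) : ℚ_[p])‖ = (p:ℝ) ^ (-(k2:ℤ)) := by
        rw [hdeq]; exact norm_pow_mul _ _ hd'
      have h2 : ‖((a * y2 ^ 3 + b * (1:ℤ) ^ 3 : ℤ) : ℚ_[p])‖ = (p:ℝ) ^ (-((N+k2:ℕ):ℤ)) := by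
        rw [hB']; exact norm_pow_mul _ _ hu2
      rw [Int.cast_mul, norm_mul, h1, h2, ← zpow_add₀ (ne_of_gt hp0)]
      congr 1
      push_cast
      ring
    rw [heq, norm_div, hden]
    have hpos : (0:ℝ) < (p:ℝ) ^ (-(k2 + (N + k2) : ℕ) : ℤ) := zpow_pos hp0 _
    calc ‖((n * (a * y2 ^ 3 + b * (1:ℤ) ^ 3) - (a * y1 ^ 3 + b * (1:ℤ) ^ 3) * dd : ℤ) : ℚ_[p])‖
          / (p:ℝ) ^ (-(k2 + (N + k2) : ℕ) : ℤ)
        ≤ (p:ℝ) ^ (-(k1 + k2 + 2*N : ℕ) : ℤ) / (p:ℝ) ^ (-(k2 + (N + k2) : ℕ) : ℤ) := by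
          exact div_le_div_of_nonneg_right hnum hpos.le |>.trans_eq rfl
      _ = (p:ℝ) ^ ((-(k1 + k2 + 2*N : ℕ) : ℤ) - (-(k2 + (N + k2) : ℕ) : ℤ)) := by
          rw [← zpow_sub₀ (ne_of_gt hp0)]
      _ ≤ (p:ℝ) ^ (-(j:ℤ)) := by
          apply zpow_le_zpow_right₀ (le_of_lt hp1)
          push_cast
          omega
      _ = ((p:ℝ))⁻¹ ^ j := by rw [zpow_neg, zpow_natCast, ← inv_pow]
      _ < ε := hj

end StmtAux

/-- For a prime `p ∤ 3ab` with `a, b` nonzero coprime integers, the ratio set of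
`C(x,y) = a x^3 + b y^3` is dense in `ℚ_p` iff `b·a⁻¹` is a cubic residue modulo `p`. -/
theorem stmt_6 (p : ℕ) [Fact p.Prime] (a b a' : ℤ) (ha : a ≠ 0) (hb : b ≠ 0)
    (hcop : IsCoprime a b) (hpab : ¬ (p : ℤ) ∣ 3 * a * b)
    (ha' : a * a' ≡ 1 [ZMOD (p : ℤ)]) :
    Dense {q : ℚ_[p] | ∃ x y z w : ℤ, a * z ^ 3 + b * w ^ 3 ≠ 0 ∧
        q = ((a * x ^ 3 + b * y ^ 3 : ℤ) : ℚ_[p]) / ((a * z ^ 3 + b * w ^ 3 : ℤ) : ℚ_[p])}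
      ↔ ∃ x : ℤ, x ^ 3 ≡ b * a' [ZMOD (p : ℤ)] := by
  have hp3 : ¬ (p:ℤ) ∣ 3 := fun h => hpab ((h.mul_right a).mul_right b)
  have hpa : ¬ (p:ℤ) ∣ a := fun h => hpab ((h.mul_left 3).mul_right b)
  have hpb : ¬ (p:ℤ) ∣ b := fun h => hpab (h.mul_left (3 * a))
  have hA : (p:ℤ) ∣ a * a' - 1 := Int.modEq_iff_dvd.mp ha'.symm
  constructor
  · intro hD
    by_contra hnores
    exact not_dense_aux a b a' hpa hA hnores hD
  · intro hcube
    obtain ⟨x0', hx0'⟩ := hcube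
    have hc : (p:ℤ) ∣ x0'^3 - b * a' := Int.modEq_iff_dvd.mp hx0'.symm
    have hroot : (p:ℤ) ∣ a * (-x0')^3 + b := by
      have key : a * (-x0')^3 + b = -(a * (x0'^3 - b * a')) - b * (a * a' - 1) := by ring
      rw [key]
      exact (dvd_neg.mpr (hc.mul_left a)).sub (hA.mul_left b)
    have hpx0 : ¬ (p:ℤ) ∣ x0' := by
      intro h
      have h3 : (p:ℤ) ∣ b * a' := by
        have h1 : (p:ℤ) ∣ x0'^3 := (h.pow (by norm_num))
        have h2 : b * a' = x0'^3 - (x0'^3 - b * a') := by ring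
        rw [h2]; exact h1.sub hc
      rcases (pZ_prime.dvd_mul).mp h3 with h' | h'
      · exact hpb h'
      · have h4 : (p:ℤ) ∣ 1 := by
          have h5 : (1:ℤ) = a * a' - (a * a' - 1) := by ring
          rw [h5]; exact (h'.mul_left a).sub hA
        exact pZ_prime.not_unit (isUnit_of_dvd_one h4)
    have hpx0n : ¬ (p:ℤ) ∣ -x0' := fun h => hpx0 (dvd_neg.mp h)
    have hp3ax2 : ¬ (p:ℤ) ∣ 3 * a * (-x0')^2 := by
      intro h
      rcases (pZ_prime.dvd_mul).mp h with h' | h'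
      · rcases (pZ_prime.dvd_mul).mp h' with h'' | h''
        · exact hp3 h''
        · exact hpa h''
      · exact hpx0n (pZ_prime.dvd_of_dvd_pow h')
    obtain ⟨d, hd0⟩ := exists_inv (3 * a * (-x0')^2) hp3ax2 1
    have hd : (p:ℤ) ∣ 3 * a * (-x0')^2 * d - 1 := by
      rwa [pow_one] at hd0
    have hhensel := hensel_lift a b (-x0') d hroot hd
    have hstepB := fun (N k : ℕ) (hN : 1 ≤ N) (hk : N ≤ k) (c : ℤ) =>
      stepB a b (-x0') d hpa hp3 hpx0n hhensel N k hN hk c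
    rw [Metric.dense_iff]
    intro q ε hε
    obtain ⟨r, hr⟩ := Padic.rat_dense p q (half_pos hε)
    have hden : ((r.den : ℤ)) ≠ 0 := by
      exact_mod_cast r.den_nz
    obtain ⟨s, hsS, hsr⟩ := approx a b hpa hstepB r.num (r.den : ℤ) hden (ε/2) (half_pos hε)
    refine ⟨s, ?_, hsS⟩
    rw [Metric.mem_ball, dist_eq_norm]
    have hrc : (r : ℚ_[p]) = ((r.num : ℤ) : ℚ_[p]) / (((r.den : ℤ)) : ℚ_[p]) := by
      rw [Rat.cast_def]
      norm_cast
    have h1 : ‖s - q‖ = ‖(s - (r:ℚ_[p])) + ((r:ℚ_[p]) - q)‖ := by ring_nf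
    calc ‖s - q‖ ≤ ‖s - (r:ℚ_[p])‖ + ‖(r:ℚ_[p]) - q‖ := by
          rw [h1]; exact norm_add_le _ _
      _ < ε/2 + ε/2 := by
          apply add_lt_add
          · rw [norm_sub_rev, hrc]; exact hsr
          · rw [norm_sub_rev]; exact hr
      _ = ε := by ring
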